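/- Let Φ = (G, φ) be a connected T-gain graph on an r-regular graph G with r ≥ 1. Then E_Φ(v) ≥ 1 for every vertex v, with equality if and only if Φ is switching equivalent to (K_{r,r}, 1). -/

import Mathlib

open Matrix BigOperators
open scoped Classical ComplexOrder

/-- A complex unit gain graph (`𝕋`-gain graph) on a finite vertex type `V`. -/
structure TGainGraph (V : Type*) [Fintype V] [DecidableEq V] where
  G : SimpleGraph V
  A : Matrix V V ℂ
  herm : A.IsHermitian
  unitGain : ∀ i j, G.Adj i j → ‖A i j‖ = 1
  zeroGain : ∀ i j, ¬ G.Adj i j → A i j = 0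

namespace TGainGraph

variable {V : Type*} [Fintype V] [DecidableEq V]

/-- The energy of a `𝕋`-gain graph: sum of absolute values of eigenvalues of `A(Φ)`. -/
noncomputable def energy (Φ : TGainGraph V) : ℝ :=
  ∑ i, |Φ.herm.eigenvalues i|

/-- `|A(Φ)| = (A(Φ) A(Φ)ᴴ)^{1/2}`. -/
noncomputable def absMatrix (Φ : TGainGraph V) : Matrix V V ℂ :=
  ((Matrix.posSemidef_self_mul_conjTranspose Φ.A).1.eigenvectorUnitary : Matrix V V ℂ) *
    diagonal (((↑) : ℝ → ℂ) ∘ (√·) ∘ (Matrix.posSemidef_self_mul_conjTranspose Φ.A).1.eigenvalues) *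
    (star (Matrix.posSemidef_self_mul_conjTranspose Φ.A).1.eigenvectorUnitary : Matrix V V ℂ)

/-- Energy of a vertex: the `(i,i)` entry of `|A(Φ)|`. -/
noncomputable def vertexEnergy (Φ : TGainGraph V) (i : V) : ℝ :=
  (Φ.absMatrix i i).re

/-- Degree of a vertex in the underlying graph. -/
noncomputable def deg (Φ : TGainGraph V) (i : V) : ℕ := Φ.G.degree i

/-- Maximum vertex degree of the underlying graph. -/
noncomputable def maxDeg (Φ : TGainGraph V) : ℕ := Φ.G.maxDegree

/-- Spectral radius of `A(Φ)`. -/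
noncomputable def specRadius (Φ : TGainGraph V) : ℝ :=
  ⨆ i, |Φ.herm.eigenvalues i|

/-- Switching equivalence of two gain graphs on the same vertex set: same
underlying graph, and adjacency matrices conjugate by a diagonal unitary. -/
def SwitchEquiv (Φ₁ Φ₂ : TGainGraph V) : Prop :=
  Φ₁.G = Φ₂.G ∧ ∃ U : Matrix V V ℂ, U.IsDiag ∧ U ∈ Matrix.unitaryGroup V ℂ ∧
    Φ₁.A = U * Φ₂.A * Uᴴ

/-- `Φ` switches to the all-ones gain on its underlying graph,
i.e. `Φ ∼ (G, 1)` (equivalently, `Φ` is balanced). -/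
def SwitchesToOne (Φ : TGainGraph V) : Prop :=
  ∃ U : Matrix V V ℂ, U.IsDiag ∧ U ∈ Matrix.unitaryGroup V ℂ ∧
    Φ.A = U * (Φ.G.adjMatrix ℂ) * Uᴴ

/-- `Φ ∼ (K_{a,b}, 1)`: the underlying graph is (isomorphic to) the complete
bipartite graph `K_{a,b}` via some bijection `e`, and the gains switch to `1`. -/
def SwitchEquivToCompleteBipartite (Φ : TGainGraph V) (a b : ℕ) : Prop :=
  (∃ e : V ≃ (Fin a ⊕ Fin b), ∀ i j, Φ.G.Adj i j ↔
      (completeBipartiteGraph (Fin a) (Fin b)).Adj (e i) (e j)) ∧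
  SwitchesToOne Φ

/-- The gain of a walk: the product of the gains of its edges in order. -/
noncomputable def walkGain (Φ : TGainGraph V) {u v : V} (w : Φ.G.Walk u v) : ℂ :=
  (w.darts.map (fun d => Φ.A d.fst d.snd)).prod

/-- A gain graph is balanced if every cycle has gain `1`. -/
def Balanced (Φ : TGainGraph V) : Prop :=
  ∀ (u : V) (w : Φ.G.Walk u u), w.IsCycle → Φ.walkGain w = 1

/-- The restriction of a gain graph to a set of vertices. -/
noncomputable def restrict (Φ : TGainGraph V) (s : Set V) : TGainGraph s where
  G := Φ.G.induce s
  A := Φ.A.submatrix (Subtype.val) (Subtype.val)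
  herm := Φ.herm.submatrix _
  unitGain := fun i j h => Φ.unitGain i j h
  zeroGain := fun i j h => Φ.zeroGain i j h

/-- The vertex set of the connected component `c`. -/
def componentSet (Φ : TGainGraph V) (c : Φ.G.ConnectedComponent) : Set V :=
  {v | Φ.G.connectedComponentMk v = c}

/-- Every connected component of `Φ` is either an isolated vertex or a balanced
complete bipartite gain graph `(K_{k,k},1)` with a perfect matching. -/
def ComponentsBalancedCompleteBipartitePM (Φ : TGainGraph V) : Prop :=
  ∀ c : Φ.G.ConnectedComponent,
    (∀ v ∈ Φ.componentSet c, ∀ w, ¬ Φ.G.Adj v w) ∨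
    ∃ k : ℕ, 0 < k ∧
      (Φ.restrict (Φ.componentSet c)).SwitchEquivToCompleteBipartite k k

/-- The matching number of a graph. -/
noncomputable def matchingNumber (G : SimpleGraph V) : ℕ :=
  sSup {k | ∃ M : G.Subgraph, M.IsMatching ∧ M.edgeSet.ncard = k}

/-- The vertex cover number of a graph. -/
noncomputable def coverNumber (G : SimpleGraph V) : ℕ :=
  sInf {k | ∃ s : Finset V, s.card = k ∧ ∀ i j, G.Adj i j → i ∈ s ∨ j ∈ s}

/-- The number of odd cycles of a graph (counted by their edge sets). -/
noncomputable def oddCycleCount (G : SimpleGraph V) : ℕ :=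
  Set.ncard {s : Set (Sym2 V) | ∃ (u : V) (w : G.Walk u u),
    w.IsCycle ∧ Odd w.length ∧ s = {e | e ∈ w.edges}}

end TGainGraph


section AuxLemmas

variable {V : Type*} [Fintype V] [DecidableEq V]

lemma conj_diag_mul (U : Matrix V V ℂ) (hU : star U * U = 1) (d e : V → ℂ) :
    (U * diagonal d * star U) * (U * diagonal e * star U)
      = U * diagonal (fun i => d i * e i) * star U := by
  have : (U * diagonal d * star U) * (U * diagonal e * star U)
      = U * (diagonal d * ((star U * U) * (diagonal e * star U))) := by
    simp only [Matrix.mul_assoc]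
  rw [this, hU, one_mul]
  simp only [Matrix.mul_assoc]
  rw [show diagonal d * (diagonal e * star U) = diagonal (fun i => d i * e i) * star U by
    rw [← Matrix.mul_assoc, diagonal_mul_diagonal]]

lemma conj_diag_apply (U : Matrix V V ℂ) (d : V → ℝ) (v : V) :
    (U * diagonal (fun i => (d i : ℂ)) * star U) v v
      = ((∑ j, d j * Complex.normSq (U v j) : ℝ) : ℂ) := by
  rw [Matrix.mul_apply]
  push_cast
  refine Finset.sum_congr rfl fun j _ => ?_
  rw [Matrix.mul_diagonal, Matrix.star_apply]
  have h1 : U v j * (d j : ℂ) * star (U v j) = (d j : ℂ) * (U v j * star (U v j)) := by ring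
  rw [h1, RCLike.star_def, Complex.mul_conj]

namespace TGainGraph
variable (Φ : TGainGraph V)

noncomputable def Umat : Matrix V V ℂ := Φ.herm.eigenvectorUnitary
noncomputable def evs : V → ℝ := Φ.herm.eigenvalues

lemma star_mul_Umat : star Φ.Umat * Φ.Umat = 1 := by
  exact Matrix.mem_unitaryGroup_iff'.mp Φ.herm.eigenvectorUnitary.2

lemma Umat_mul_star : Φ.Umat * star Φ.Umat = 1 := by
  exact Matrix.mem_unitaryGroup_iff.mp Φ.herm.eigenvectorUnitary.2

lemma spec : Φ.A = Φ.Umat * diagonal (fun i => (Φ.evs i : ℂ)) * star Φ.Umat := by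
  simpa [Umat, evs, Function.comp_def] using Φ.herm.spectral_theorem

lemma A_sq : Φ.A ^ 2 = Φ.Umat * diagonal (fun i => (((Φ.evs i)^2 : ℝ) : ℂ)) * star Φ.Umat := by
  rw [sq, Φ.spec, conj_diag_mul _ Φ.star_mul_Umat]
  congr 2
  ext i
  push_cast
  ring_nf

lemma A_mul_conjT : Φ.A * Φ.Aᴴ = Φ.A ^ 2 := by rw [Φ.herm.eq, sq]

open scoped MatrixOrder in
lemma absMatrix_eq_of_sq (C : Matrix V V ℂ) (hC : C.PosSemidef)
    (h2 : C ^ 2 = Φ.A * Φ.Aᴴ) : Φ.absMatrix = C := by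
  have hM := Matrix.posSemidef_self_mul_conjTranspose Φ.A
  have h1 : CFC.sqrt (Φ.A * Φ.Aᴴ) = C := by
    rw [CFC.sqrt_eq_iff _ _ hM.nonneg hC.nonneg, ← sq, h2]
  rw [← h1, CFC.sqrt_eq_cfc, cfc_nnreal_eq_real _ _, hM.1.cfc_eq]
  unfold absMatrix IsHermitian.cfc
  simp only [Unitary.conjStarAlgAut_apply]
  congr 3
  funext i
  simp [Real.coe_sqrt, Real.coe_toNNReal', hM.eigenvalues_nonneg i]

lemma absMatrix_eq : Φ.absMatrix = Φ.Umat * diagonal (fun i => ((|Φ.evs i| : ℝ) : ℂ)) * star Φ.Umat := by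
  symm
  refine (Φ.absMatrix_eq_of_sq _ ?_ ?_).symm
  · rw [show star Φ.Umat = Φ.Umatᴴ from rfl]
    exact (Matrix.posSemidef_diagonal_iff.mpr
      (fun i => by rw [Complex.zero_le_real]; positivity)).mul_mul_conjTranspose_same _
  · rw [sq, conj_diag_mul _ Φ.star_mul_Umat, Φ.A_mul_conjT, Φ.A_sq]
    have h2 : (fun i => ((|Φ.evs i| : ℝ) : ℂ) * ((|Φ.evs i| : ℝ) : ℂ))
        = fun i => (((Φ.evs i)^2 : ℝ) : ℂ) := by
      funext i
      rw [← Complex.ofReal_mul, abs_mul_abs_self, sq, Complex.ofReal_mul]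
    rw [h2]

lemma row_normSq (v : V) : ∑ j, Complex.normSq (Φ.Umat v j) = 1 := by
  have h := congrFun (congrFun Φ.Umat_mul_star v) v
  rw [Matrix.mul_apply] at h
  have : ∀ j, Φ.Umat v j * star Φ.Umat j v = (Complex.normSq (Φ.Umat v j) : ℂ) := by
    intro j
    rw [Matrix.star_apply, RCLike.star_def, Complex.mul_conj]
  rw [Finset.sum_congr rfl (fun j _ => this j), Matrix.one_apply_eq] at h
  exact_mod_cast h

lemma col_orthog (i i' : V) : ∑ j, (starRingEnd ℂ) (Φ.Umat j i) * Φ.Umat j i'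
    = if i = i' then 1 else 0 := by
  have h := congrFun (congrFun Φ.star_mul_Umat i) i'
  rw [Matrix.mul_apply] at h
  simp only [Matrix.star_apply, RCLike.star_def] at h
  rw [h, Matrix.one_apply]

lemma col_normSq (i : V) : ∑ j, Complex.normSq (Φ.Umat j i) = 1 := by
  have h := Φ.col_orthog i i
  simp only [if_pos rfl] at h
  have : ∀ j, (starRingEnd ℂ) (Φ.Umat j i) * Φ.Umat j i = (Complex.normSq (Φ.Umat j i) : ℂ) := by
    intro j; rw [mul_comm, Complex.mul_conj]
  rw [Finset.sum_congr rfl (fun j _ => this j)] at h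
  norm_num at h
  exact_mod_cast h

lemma col_eigen (i : V) :
    Φ.A *ᵥ (fun j => Φ.Umat j i) = (Φ.evs i : ℂ) • (fun j => Φ.Umat j i) := by
  have h : Φ.A * Φ.Umat = Φ.Umat * diagonal (fun i => (Φ.evs i : ℂ)) := by
    rw [Φ.spec, Matrix.mul_assoc, Matrix.mul_assoc, Φ.star_mul_Umat, Matrix.mul_one]
  funext j
  have h2 := congrFun (congrFun h j) i
  rw [Matrix.mul_apply, Matrix.mul_diagonal] at h2
  simpa [Matrix.mulVec, dotProduct, mul_comm] using h2

lemma vertexEnergy_eq (v : V) :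
    (Φ.absMatrix v v).re = ∑ j, |Φ.evs j| * Complex.normSq (Φ.Umat v j) := by
  rw [Φ.absMatrix_eq, conj_diag_apply, Complex.ofReal_re]

lemma absMatrix_diag_real (v : V) :
    Φ.absMatrix v v = ((Φ.absMatrix v v).re : ℂ) := by
  rw [Φ.absMatrix_eq, conj_diag_apply, Complex.ofReal_re]

lemma normSq_A (j k : V) : Complex.normSq (Φ.A j k) = if Φ.G.Adj j k then 1 else 0 := by
  by_cases h : Φ.G.Adj j k
  · rw [if_pos h, ← Complex.sq_norm, Φ.unitGain j k h, one_pow]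
  · rw [if_neg h, Φ.zeroGain j k h, map_zero]

lemma abs_A (j k : V) : ‖Φ.A j k‖ = if Φ.G.Adj j k then 1 else 0 := by
  by_cases h : Φ.G.Adj j k
  · rw [if_pos h, Φ.unitGain j k h]
  · rw [if_neg h, Φ.zeroGain j k h, norm_zero]

lemma rowsum_abs (j : V) : ∑ k, ‖Φ.A j k‖ = (Φ.G.degree j : ℝ) := by
  rw [Finset.sum_congr rfl (fun k _ => Φ.abs_A j k), Finset.sum_boole,
    SimpleGraph.degree, SimpleGraph.neighborFinset_eq_filter]

lemma Asq_diag (v : V) :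
    ∑ j, (Φ.evs j)^2 * Complex.normSq (Φ.Umat v j) = (Φ.G.degree v : ℝ) := by
  have h1 : (Φ.A ^ 2) v v = ((∑ j, (Φ.evs j)^2 * Complex.normSq (Φ.Umat v j) : ℝ) : ℂ) := by
    rw [Φ.A_sq, conj_diag_apply]
  have h2 : (Φ.A ^ 2) v v = ((Φ.G.degree v : ℝ) : ℂ) := by
    rw [sq, Matrix.mul_apply]
    have : ∀ j, Φ.A v j * Φ.A j v = (Complex.normSq (Φ.A v j) : ℂ) := by
      intro j
      have hh : Φ.A j v = (starRingEnd ℂ) (Φ.A v j) := by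
        have := congrFun (congrFun Φ.herm.eq j) v
        rw [← this]
        rfl
      rw [hh, Complex.mul_conj]
    rw [Finset.sum_congr rfl (fun j _ => this j)]
    rw [Finset.sum_congr rfl (fun j _ => by rw [Φ.normSq_A])]
    have h3 : ∑ j, (if Φ.G.Adj v j then (1:ℝ) else 0) = (Φ.G.degree v : ℝ) := by
      rw [Finset.sum_boole, SimpleGraph.degree, SimpleGraph.neighborFinset_eq_filter]
    have h4 := congrArg (fun t : ℝ => (t : ℂ)) h3
    push_cast at h4 ⊢
    exact h4
  exact_mod_cast h1.symm.trans h2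

end TGainGraph

lemma complex_eq_of_re_eq {s t : ℂ} (hs : s ≠ 0)
    (h : ((starRingEnd ℂ) s * t).re = ‖s‖ * ‖t‖) :
    (‖s‖ : ℂ) * t = (‖t‖ : ℂ) * s := by
  set z := (starRingEnd ℂ) s * t with hz
  have habs : ‖z‖ = ‖s‖ * ‖t‖ := by
    rw [hz, Complex.norm_def, Complex.normSq_mul, Real.sqrt_mul (Complex.normSq_nonneg _), ← Complex.norm_def, ← Complex.norm_def, Complex.norm_conj]
  have hre : z.re = ‖z‖ := by rw [habs, ← h]
  have him : z.im = 0 := by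
    by_contra him
    have h1 := Complex.abs_re_lt_norm.mpr him
    have h2 : z.re ≤ |z.re| := le_abs_self _
    linarith [hre]
  have hz' : z = ((‖s‖ * ‖t‖ : ℝ) : ℂ) := by
    apply Complex.ext
    · rw [hre, habs]; simp
    · simp [him]
  have h3 : s * ((starRingEnd ℂ) s * t) = s * ((‖s‖ * ‖t‖ : ℝ) : ℂ) := by
    rw [← hz, hz']
  rw [← mul_assoc, Complex.mul_conj, Complex.normSq_eq_norm_sq] at h3
  have hasne : (‖s‖ : ℂ) ≠ 0 := by
    simpa using (norm_ne_zero_iff.mpr hs)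
  apply mul_left_cancel₀ hasne
  rw [← mul_assoc, ← Complex.ofReal_mul, ← sq, h3]
  push_cast
  ring

namespace TGainGraph
variable (Φ : TGainGraph V)

lemma eig_bound [Nonempty V] {r : ℕ} (hreg : ∀ v, Φ.G.degree v = r)
    {x : V → ℂ} (hx : x ≠ 0) {μ : ℂ} (hμ : Φ.A *ᵥ x = μ • x) :
    ‖μ‖ ≤ r := by
  obtain ⟨j0, -, hmax⟩ := Finset.exists_max_image Finset.univ (fun j => ‖x j‖)
    Finset.univ_nonempty
  have hm : 0 < ‖x j0‖ := by
    rcases Function.ne_iff.mp hx with ⟨k, hk⟩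
    exact lt_of_lt_of_le (by simpa using (norm_pos_iff.mpr hk)) (hmax k (Finset.mem_univ k))
  have h1 : ‖μ‖ * ‖x j0‖ ≤ (r : ℝ) * ‖x j0‖ := by
    have he : (Φ.A *ᵥ x) j0 = μ * x j0 := by rw [hμ]; rfl
    have h2 : ‖(Φ.A *ᵥ x) j0‖ = ‖μ‖ * ‖x j0‖ := by
      rw [he, norm_mul]
    rw [← h2]
    calc ‖(Φ.A *ᵥ x) j0‖ ≤ ∑ k, ‖Φ.A j0 k * x k‖ := by
          rw [Matrix.mulVec, dotProduct]; exact norm_sum_le _ _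
      _ ≤ ∑ k, ‖Φ.A j0 k‖ * ‖x j0‖ := by
          apply Finset.sum_le_sum; intro k _
          rw [norm_mul]
          exact mul_le_mul_of_nonneg_left (hmax k (Finset.mem_univ k)) (norm_nonneg _)
      _ = (r:ℝ) * ‖x j0‖ := by
          rw [← Finset.sum_mul, Φ.rowsum_abs, hreg]
  exact le_of_mul_le_mul_right h1 hm

lemma perron_eq (hconn : Φ.G.Connected) {r : ℕ} (hr : 1 ≤ r)
    (hreg : ∀ v, Φ.G.degree v = r) {x : V → ℂ} (hx : x ≠ 0) {μ : ℝ}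
    (hμr : |μ| = r) (hμ : Φ.A *ᵥ x = (μ:ℂ) • x) :
    (∀ j k, ‖x j‖ = ‖x k‖) ∧
    (∀ j k, Φ.G.Adj j k → (r:ℂ) * (Φ.A j k * x k) = (μ:ℂ) * x j) := by
  have : Nonempty V := hconn.nonempty
  obtain ⟨j0, -, hmax⟩ := Finset.exists_max_image Finset.univ (fun j => ‖x j‖)
    Finset.univ_nonempty
  set m := ‖x j0‖ with hm_def
  have hm : 0 < m := by
    rcases Function.ne_iff.mp hx with ⟨k, hk⟩
    exact lt_of_lt_of_le (norm_pos_iff.mpr hk) (hmax k (Finset.mem_univ k))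
  have hr0 : (0:ℝ) < r := by exact_mod_cast Nat.lt_of_lt_of_le Nat.zero_lt_one hr
  have key : ∀ j, ‖x j‖ = m →
      (∀ k, Φ.G.Adj j k → ‖x k‖ = m) ∧
      (∀ k, Φ.G.Adj j k → (r:ℂ) * (Φ.A j k * x k) = (μ:ℂ) * x j) := by
    intro j hj
    set s := (μ:ℂ) * x j with hs_def
    have hsum : ∑ k, Φ.A j k * x k = s := by
      have h0 : (Φ.A *ᵥ x) j = ((μ:ℂ) • x) j := by rw [hμ]
      simpa [Matrix.mulVec, dotProduct] using h0
    have habs_s : ‖s‖ = (r:ℝ) * m := by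
      rw [hs_def, norm_mul, Complex.norm_real, Real.norm_eq_abs, hμr, hj]
    have hle2each : ∀ k ∈ Finset.univ, ‖Φ.A j k * x k‖
        ≤ ‖Φ.A j k‖ * m := fun k _ => by
      rw [norm_mul]
      exact mul_le_mul_of_nonneg_left (hmax k (Finset.mem_univ k)) (norm_nonneg _)
    have htot : ∑ k, ‖Φ.A j k‖ * m = (r:ℝ) * m := by
      rw [← Finset.sum_mul, Φ.rowsum_abs, hreg]
    have hsum_ge : (r:ℝ) * m ≤ ∑ k, ‖Φ.A j k * x k‖ := by
      calc (r:ℝ) * m = ‖∑ k, Φ.A j k * x k‖ := by rw [hsum, habs_s]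
        _ ≤ _ := norm_sum_le _ _
    have hsum_le : ∑ k, ‖Φ.A j k * x k‖ ≤ (r:ℝ) * m :=
      le_trans (Finset.sum_le_sum hle2each) htot.le
    have hsum_abs : ∑ k, ‖Φ.A j k * x k‖ = (r:ℝ) * m :=
      le_antisymm hsum_le hsum_ge
    have heq2 : ∀ k ∈ Finset.univ, ‖Φ.A j k * x k‖ = ‖Φ.A j k‖ * m :=
      (Finset.sum_eq_sum_iff_of_le hle2each).mp (hsum_abs.trans htot.symm)
    have hle3 : ∀ k ∈ Finset.univ, ((starRingEnd ℂ) s * (Φ.A j k * x k)).re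
        ≤ ‖s‖ * ‖Φ.A j k * x k‖ := by
      intro k _
      calc ((starRingEnd ℂ) s * (Φ.A j k * x k)).re
          ≤ ‖(starRingEnd ℂ) s * (Φ.A j k * x k)‖ := Complex.re_le_norm _
        _ = ‖s‖ * ‖Φ.A j k * x k‖ := by
            rw [norm_mul, Complex.norm_conj]
    have hsum_re : ∑ k, ((starRingEnd ℂ) s * (Φ.A j k * x k)).re
        = ∑ k, ‖s‖ * ‖Φ.A j k * x k‖ := by
      have l1 : ∑ k, ((starRingEnd ℂ) s * (Φ.A j k * x k)).re
          = ((starRingEnd ℂ) s * s).re := by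
        rw [← Complex.re_sum, ← Finset.mul_sum, hsum]
      have l2 : ((starRingEnd ℂ) s * s).re = ‖s‖ ^ 2 := by
        rw [mul_comm, Complex.mul_conj, Complex.normSq_eq_norm_sq, Complex.ofReal_re]
      have l3 : ∑ k, ‖s‖ * ‖Φ.A j k * x k‖ = ‖s‖ ^ 2 := by
        rw [← Finset.mul_sum, hsum_abs, habs_s, sq]
      rw [l1, l2, l3]
    have hre_each := (Finset.sum_eq_sum_iff_of_le hle3).mp hsum_re
    have hs0 : s ≠ 0 := by
      intro h0
      rw [h0, norm_zero] at habs_s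
      nlinarith
    refine ⟨fun k hk => ?_, fun k hk => ?_⟩
    · have h5 := heq2 k (Finset.mem_univ k)
      rw [norm_mul, Φ.abs_A, if_pos hk, one_mul, one_mul] at h5
      exact h5
    · have habs_tk : ‖Φ.A j k * x k‖ = m := by
        rw [heq2 k (Finset.mem_univ k), Φ.abs_A, if_pos hk, one_mul]
      have h6 := complex_eq_of_re_eq hs0 (hre_each k (Finset.mem_univ k))
      rw [habs_s, habs_tk] at h6
      have hmne : (m:ℂ) ≠ 0 := by exact_mod_cast ne_of_gt hm
      apply mul_left_cancel₀ hmne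
      push_cast at h6 ⊢
      linear_combination h6
  have hconst : ∀ j, ‖x j‖ = m := by
    have step : ∀ a b : V, Φ.G.Walk a b → ‖x a‖ = m → ‖x b‖ = m := by
      intro a b w
      induction w with
      | nil => exact id
      | cons h p ih => exact fun ha => ih ((key _ ha).1 _ h)
    intro j
    obtain ⟨w⟩ := hconn.preconnected j0 j
    exact step j0 j w rfl
  exact ⟨fun j k => (hconst j).trans (hconst k).symm,
    fun j k hjk => (key j (hconst j)).2 k hjk⟩

end TGainGraph

omit [Fintype V] [DecidableEq V] in
lemma walk_induct {G : SimpleGraph V} (hconn : G.Connected) (P : V → Prop)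
    (hstep : ∀ j k, G.Adj j k → P j → P k) {v0 : V} (h0 : P v0) : ∀ j, P j := by
  have step : ∀ a b : V, G.Walk a b → P a → P b := by
    intro a b w
    induction w with
    | nil => exact id
    | cons h p ih => exact fun ha => ih (hstep _ _ h ha)
  intro j
  obtain ⟨w⟩ := hconn.preconnected v0 j
  exact step v0 j w h0

lemma card_ge {G : SimpleGraph V} {r : ℕ} (v : V) (hdeg : G.degree v = r) :
    r + 1 ≤ Fintype.card V := by
  have h1 : G.neighborFinset v ⊆ Finset.univ.erase v := by
    intro k hk
    rw [Finset.mem_erase]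
    exact ⟨((SimpleGraph.mem_neighborFinset _ _ _).mp hk).ne', Finset.mem_univ k⟩
  have h2 := Finset.card_le_card h1
  rw [SimpleGraph.card_neighborFinset_eq_degree, hdeg,
    Finset.card_erase_of_mem (Finset.mem_univ v), Finset.card_univ] at h2
  have h3 : 1 ≤ Fintype.card V := Fintype.card_pos_iff.mpr ⟨v⟩
  omega

namespace TGainGraph
variable (Φ : TGainGraph V)

lemma edge_ratio {r : ℕ} {x y : V → ℂ} {μ ν : ℝ}
    (hxe : ∀ j k, Φ.G.Adj j k → (r:ℂ) * (Φ.A j k * x k) = (μ:ℂ) * x j)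
    (hye : ∀ j k, Φ.G.Adj j k → (r:ℂ) * (Φ.A j k * y k) = (ν:ℂ) * y j)
    {j k : V} (hjk : Φ.G.Adj j k) :
    ((r:ℂ))^2 * ((starRingEnd ℂ) (x k) * y k)
      = ((μ:ℂ) * (ν:ℂ)) * ((starRingEnd ℂ) (x j) * y j) := by
  have ha : (starRingEnd ℂ) (Φ.A j k) * Φ.A j k = 1 := by
    rw [mul_comm, Complex.mul_conj, Φ.normSq_A, if_pos hjk]
    norm_num
  have hy := hye j k hjk
  have cx := congrArg (starRingEnd ℂ) (hxe j k hjk)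
  simp only [_root_.map_mul, Complex.conj_ofReal, map_natCast] at cx
  linear_combination ((r:ℂ) * Φ.A j k * y k) * cx + (μ:ℂ) * (starRingEnd ℂ) (x j) * hy
    - (r:ℂ)^2 * (starRingEnd ℂ) (x k) * y k * ha

lemma evs_bound [Nonempty V] {r : ℕ} (hreg : ∀ v, Φ.G.degree v = r) (i : V) :
    |Φ.evs i| ≤ r := by
  have hx0 : (fun j => Φ.Umat j i) ≠ 0 := by
    intro h0
    have hc := Φ.col_normSq i
    rw [funext_iff] at h0
    simp only [Pi.zero_apply] at h0
    simp [h0] at hc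
  simpa [Complex.norm_real] using Φ.eig_bound hreg hx0 (Φ.col_eigen i)

lemma one_le_vE (hconn : Φ.G.Connected) {r : ℕ} (hr : 1 ≤ r)
    (hreg : ∀ v, Φ.G.degree v = r) (v : V) : 1 ≤ (Φ.absMatrix v v).re := by
  have : Nonempty V := hconn.nonempty
  have hr0 : (0:ℝ) < r := by exact_mod_cast Nat.lt_of_lt_of_le Nat.zero_lt_one hr
  have h1 : (r:ℝ) * ∑ j, |Φ.evs j| * Complex.normSq (Φ.Umat v j) ≥ (r:ℝ) := by
    calc (r:ℝ) * ∑ j, |Φ.evs j| * Complex.normSq (Φ.Umat v j)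
        = ∑ j, ((r:ℝ) * |Φ.evs j|) * Complex.normSq (Φ.Umat v j) := by
          rw [Finset.mul_sum]
          exact Finset.sum_congr rfl fun j _ => by ring
      _ ≥ ∑ j, (Φ.evs j)^2 * Complex.normSq (Φ.Umat v j) := by
          apply Finset.sum_le_sum
          intro j _
          have hb := Φ.evs_bound hreg j
          have hn := Complex.normSq_nonneg (Φ.Umat v j)
          have key : (Φ.evs j)^2 ≤ (r:ℝ) * |Φ.evs j| := by
            nlinarith [sq_abs (Φ.evs j), abs_nonneg (Φ.evs j)]
          exact mul_le_mul_of_nonneg_right key hn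
      _ = (r:ℝ) := by rw [Φ.Asq_diag v, hreg v]
  rw [Φ.vertexEnergy_eq]
  nlinarith [h1]

end TGainGraph

lemma adjMatrix_herm (G : SimpleGraph V) : (G.adjMatrix ℂ).IsHermitian := by
  unfold Matrix.IsHermitian
  ext j k
  simp [Matrix.conjTranspose_apply, SimpleGraph.adjMatrix_apply, SimpleGraph.adj_comm,
    apply_ite (starRingEnd ℂ)]

namespace TGainGraph

lemma converse_case (Φ : TGainGraph V) {r : ℕ} (hr : 1 ≤ r)
    (hreg : ∀ v, Φ.G.degree v = r)
    (e : V ≃ (Fin r ⊕ Fin r))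
    (he : ∀ i j, Φ.G.Adj i j ↔ (completeBipartiteGraph (Fin r) (Fin r)).Adj (e i) (e j))
    (U : Matrix V V ℂ) (hdiag : U.IsDiag) (hU : U ∈ Matrix.unitaryGroup V ℂ)
    (hA : Φ.A = U * (Φ.G.adjMatrix ℂ) * Uᴴ) (v : V) :
    (Φ.absMatrix v v).re = 1 := by
  set side := fun j => (e j).isLeft with hside
  have hadj : ∀ j k, Φ.G.Adj j k ↔ side j ≠ side k := by
    intro j k
    rw [he]
    rcases hj : e j with a | a <;> rcases hk : e k with b | b <;>
      simp [hside, hj, hk]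
  -- both sides nonempty
  have hfin : (0:ℕ) < r := hr
  have hcard : ∀ b : Bool, (Finset.univ.filter (fun l => side l = b)).card = r := by
    intro b
    set j0 := e.symm (if b then Sum.inr ⟨0, hfin⟩ else Sum.inl ⟨0, hfin⟩) with hj0
    have hsj0 : side j0 = !b := by
      cases b <;> simp [hside, hj0, Equiv.apply_symm_apply]
    have : Finset.univ.filter (fun l => side l = b) = Φ.G.neighborFinset j0 := by
      ext l
      rw [SimpleGraph.mem_neighborFinset, hadj, hsj0, Finset.mem_filter]
      cases hb : side l <;> cases b <;> simp_all
    rw [this, SimpleGraph.card_neighborFinset_eq_degree, hreg]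
  set J := Φ.G.adjMatrix ℂ with hJ
  set B : Matrix V V ℂ := Matrix.of fun j k => if side j = side k then 1 else 0 with hB
  set N : Matrix Bool V ℂ := Matrix.of fun b j => if side j = b then 1 else 0 with hN
  have hBN : Nᴴ * N = B := by
    ext j k
    rw [Matrix.mul_apply]
    simp only [Matrix.conjTranspose_apply, hN, Matrix.of_apply, hB]
    cases hsj : side j <;> cases hsk : side k <;> simp [Fintype.sum_bool, hsj, hsk]
  have hBpsd : B.PosSemidef := hBN ▸ Matrix.posSemidef_conjTranspose_mul_self N
  have hB2 : B * B = (r:ℂ) • B := by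
    ext j k
    rw [Matrix.mul_apply]
    simp only [hB, Matrix.of_apply, Matrix.smul_apply]
    by_cases h : side j = side k
    · rw [if_pos h]
      have : ∀ l, (if side j = side l then (1:ℂ) else 0) * (if side l = side k then 1 else 0)
          = if side l = side j then 1 else 0 := by
        intro l
        rcases hl : side l <;> rcases hsj : side j <;> simp_all
      rw [Finset.sum_congr rfl fun l _ => this l, Finset.sum_boole, hcard]
      norm_num
    · rw [if_neg h]
      rw [Finset.sum_eq_zero, smul_zero]
      intro l _
      rcases hl : side l <;> rcases hsj : side j <;> rcases hsk : side k <;> simp_all [← Sum.not_isLeft, -Sum.isLeft_eq_false]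
  have hJ2 : J * J = (r:ℂ) • B := by
    ext j k
    rw [Matrix.mul_apply]
    simp only [hJ, SimpleGraph.adjMatrix_apply, hB, Matrix.of_apply, Matrix.smul_apply]
    have hterm : ∀ l, (if Φ.G.Adj j l then (1:ℂ) else 0) * (if Φ.G.Adj l k then 1 else 0)
        = if (side l ≠ side j ∧ side l ≠ side k) then 1 else 0 := by
      intro l
      rw [show (if Φ.G.Adj j l then (1:ℂ) else 0) = if side j ≠ side l then 1 else 0 by
          by_cases h : Φ.G.Adj j l
          · rw [if_pos h, if_pos ((hadj j l).mp h)]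
          · rw [if_neg h, if_neg (fun hc => h ((hadj j l).mpr hc))],
        show (if Φ.G.Adj l k then (1:ℂ) else 0) = if side l ≠ side k then 1 else 0 by
          by_cases h : Φ.G.Adj l k
          · rw [if_pos h, if_pos ((hadj l k).mp h)]
          · rw [if_neg h, if_neg (fun hc => h ((hadj l k).mpr hc))]]
      cases hsl : side l <;> cases hsj : side j <;> cases hsk : side k <;> simp
    rw [Finset.sum_congr rfl fun l _ => hterm l]
    by_cases h : side j = side k
    · rw [if_pos h]
      have hcg : ∀ l, (if (side l ≠ side j ∧ side l ≠ side k) then (1:ℂ) else 0)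
          = if side l = !side j then 1 else 0 := by
        intro l
        cases hsl : side l <;> cases hsj : side j <;> cases hsk : side k <;> simp_all [← Sum.not_isLeft, -Sum.isLeft_eq_false]
      rw [Finset.sum_congr rfl fun l _ => hcg l, Finset.sum_boole, hcard]
      norm_num
    · rw [if_neg h]
      rw [Finset.sum_eq_zero, smul_zero]
      intro l _
      have : ¬ (side l ≠ side j ∧ side l ≠ side k) := by
        cases hl : side l <;> cases hsj : side j <;> cases hsk : side k <;> simp_all [← Sum.not_isLeft, -Sum.isLeft_eq_false]
      rw [if_neg this]
  have hUU : Uᴴ * U = 1 := by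
    rw [← Matrix.star_eq_conjTranspose]
    exact Matrix.mem_unitaryGroup_iff'.mp hU
  have hconj_mul : ∀ M M' : Matrix V V ℂ, (U * M * Uᴴ) * (U * M' * Uᴴ) = U * (M * M') * Uᴴ := by
    intro M M'
    have h1 : (U * M * Uᴴ) * (U * M' * Uᴴ) = U * (M * ((Uᴴ * U) * (M' * Uᴴ))) := by
      simp only [Matrix.mul_assoc]
    rw [h1, hUU, one_mul]
    simp only [Matrix.mul_assoc]
  set C := U * B * Uᴴ with hC
  have hCpsd : C.PosSemidef := hBpsd.mul_mul_conjTranspose_same U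
  have hC2 : C ^ 2 = Φ.A * Φ.Aᴴ := by
    rw [Φ.A_mul_conjT, sq, hC, hconj_mul, hB2, hA, sq, hconj_mul, hJ2]
  have habs : Φ.absMatrix = C := Φ.absMatrix_eq_of_sq C hCpsd hC2
  -- diagonal entry
  have hUrow : ∀ a, a ≠ v → U v a = 0 := fun a ha => hdiag (Ne.symm ha)
  have hUB : (U * B) v v = U v v * B v v := by
    rw [Matrix.mul_apply]
    rw [Finset.sum_eq_single v (fun a _ ha => by rw [hUrow a ha, zero_mul]) (by simp)]
  have hCvv : C v v = U v v * B v v * (starRingEnd ℂ) (U v v) := by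
    rw [hC, Matrix.mul_apply]
    rw [Finset.sum_eq_single v (fun b _ hb => by
      rw [Matrix.conjTranspose_apply, hUrow b hb, star_zero, mul_zero]) (by simp)]
    rw [hUB, Matrix.conjTranspose_apply]
    rfl
  have hUvv : U v v * (starRingEnd ℂ) (U v v) = 1 := by
    have h1 := congrFun (congrFun (Matrix.mem_unitaryGroup_iff.mp hU) v) v
    rw [Matrix.mul_apply] at h1
    rw [Finset.sum_eq_single v (fun a _ ha => by
      rw [Matrix.star_apply, hUrow a ha, star_zero, mul_zero]) (by simp)] at h1
    rw [Matrix.one_apply_eq] at h1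
    rw [← h1]
    rfl
  have hBvv : B v v = 1 := by rw [hB]; simp
  rw [habs, hCvv, hBvv, mul_one, hUvv]
  rfl

end TGainGraph
namespace TGainGraph
-- equality_case development (appended to c1 context when testing)
lemma equality_case (Φ : TGainGraph V) (hconn : Φ.G.Connected) {r : ℕ} (hr : 1 ≤ r)
    (hreg : ∀ v, Φ.G.degree v = r) (v : V) (hE : (Φ.absMatrix v v).re = 1) :
    (∃ e : V ≃ (Fin r ⊕ Fin r), ∀ i j, Φ.G.Adj i j ↔
      (completeBipartiteGraph (Fin r) (Fin r)).Adj (e i) (e j)) ∧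
    ∃ U : Matrix V V ℂ, U.IsDiag ∧ U ∈ Matrix.unitaryGroup V ℂ ∧
      Φ.A = U * (Φ.G.adjMatrix ℂ) * Uᴴ := by
  have hne : Nonempty V := hconn.nonempty
  have hr0 : (0:ℝ) < r := by exact_mod_cast Nat.lt_of_lt_of_le Nat.zero_lt_one hr
  set n := Fintype.card V with hn
  have hn0 : (0:ℝ) < n := by
    have : 0 < n := Fintype.card_pos
    exact_mod_cast this
  -- mass analysis
  have h_sum1 : ∑ j, |Φ.evs j| * Complex.normSq (Φ.Umat v j) = 1 := by
    rw [← Φ.vertexEnergy_eq, hE]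
  have h_sum2 : ∑ j, (Φ.evs j)^2 * Complex.normSq (Φ.Umat v j) = (r:ℝ) := by
    rw [Φ.Asq_diag v, hreg v]
  have hterm : ∀ j, ((r:ℝ) * |Φ.evs j| - (Φ.evs j)^2) * Complex.normSq (Φ.Umat v j) = 0 := by
    have hzero : ∑ j, ((r:ℝ) * |Φ.evs j| - (Φ.evs j)^2) * Complex.normSq (Φ.Umat v j) = 0 := by
      have : ∀ j, ((r:ℝ) * |Φ.evs j| - (Φ.evs j)^2) * Complex.normSq (Φ.Umat v j)
          = (r:ℝ) * (|Φ.evs j| * Complex.normSq (Φ.Umat v j))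
            - (Φ.evs j)^2 * Complex.normSq (Φ.Umat v j) := fun j => by ring
      rw [Finset.sum_congr rfl fun j _ => this j, Finset.sum_sub_distrib, ← Finset.mul_sum,
        h_sum1, h_sum2, mul_one, sub_self]
    have hnonneg : ∀ j ∈ Finset.univ,
        0 ≤ ((r:ℝ) * |Φ.evs j| - (Φ.evs j)^2) * Complex.normSq (Φ.Umat v j) := by
      intro j _
      apply mul_nonneg _ (Complex.normSq_nonneg _)
      have hb := Φ.evs_bound hreg j
      nlinarith [sq_abs (Φ.evs j), abs_nonneg (Φ.evs j)]
    intro j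
    exact (Finset.sum_eq_zero_iff_of_nonneg hnonneg).mp hzero j (Finset.mem_univ j)
  set I := Finset.univ.filter (fun i => |Φ.evs i| = (r:ℝ)) with hI
  have hmass : (r:ℝ) * ∑ i ∈ I, Complex.normSq (Φ.Umat v i) = 1 := by
    have e1 : ∑ i ∈ I, (r:ℝ) * Complex.normSq (Φ.Umat v i)
        = ∑ i ∈ I, |Φ.evs i| * Complex.normSq (Φ.Umat v i) := by
      refine Finset.sum_congr rfl fun i hiI => ?_
      rw [hI, Finset.mem_filter] at hiI
      rw [hiI.2]
    have e2 : ∑ i ∈ I, |Φ.evs i| * Complex.normSq (Φ.Umat v i)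
        = ∑ j, |Φ.evs j| * Complex.normSq (Φ.Umat v j) := by
      apply Finset.sum_subset (Finset.subset_univ I)
      intro j _ hj
      rw [hI, Finset.mem_filter] at hj
      have hj2 : ¬ |Φ.evs j| = (r:ℝ) := fun hc => hj ⟨Finset.mem_univ j, hc⟩
      by_cases h0 : Complex.normSq (Φ.Umat v j) = 0
      · rw [h0, mul_zero]
      · have := hterm j
        rcases mul_eq_zero.mp this with h1 | h1
        · have habs := abs_nonneg (Φ.evs j)
          have h2 : |Φ.evs j| * ((r:ℝ) - |Φ.evs j|) = 0 := by
            nlinarith [sq_abs (Φ.evs j)]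
          rcases mul_eq_zero.mp h2 with h3 | h3
          · rw [abs_eq_zero.mp h3]; simp
          · exact absurd (by linarith : |Φ.evs j| = (r:ℝ)) hj2
        · exact absurd h1 h0
    rw [Finset.mul_sum, e1, e2, h_sum1]

  -- Perron data for columns indexed by I
  have hcol_ne : ∀ i : V, (fun j => Φ.Umat j i) ≠ 0 := by
    intro i h0
    have hc := Φ.col_normSq i
    rw [funext_iff] at h0
    simp only [Pi.zero_apply] at h0
    simp [h0] at hc
  have hIeig : ∀ i ∈ I, |Φ.evs i| = (r:ℝ) := fun i hi => (Finset.mem_filter.mp hi).2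
  have hperron : ∀ i ∈ I,
      (∀ j k, ‖Φ.Umat j i‖ = ‖Φ.Umat k i‖) ∧
      (∀ j k, Φ.G.Adj j k → (r:ℂ) * (Φ.A j k * Φ.Umat k i)
        = ((Φ.evs i : ℝ):ℂ) * Φ.Umat j i) := by
    intro i hi
    exact Φ.perron_eq hconn hr hreg (hcol_ne i) (hIeig i hi) (Φ.col_eigen i)
  have hconstSq : ∀ i ∈ I, ∀ j, Complex.normSq (Φ.Umat j i) = 1 / n := by
    intro i hi j
    have hcn := Φ.col_normSq i
    have hsame : ∀ k, Complex.normSq (Φ.Umat k i) = Complex.normSq (Φ.Umat j i) := by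
      intro k
      rw [← Complex.sq_norm, ← Complex.sq_norm, (hperron i hi).1 k j]
    rw [Finset.sum_congr rfl fun k _ => hsame k, Finset.sum_const, Finset.card_univ,
      nsmul_eq_mul] at hcn
    rw [eq_div_iff (ne_of_gt hn0)]
    linear_combination hcn
  have hIcard : (I.card : ℝ) * r = n := by
    rw [Finset.sum_congr rfl (fun i hi => hconstSq i hi v), Finset.sum_const,
      nsmul_eq_mul] at hmass
    have h2 : (r:ℝ) * ((I.card : ℝ) * (1/n)) = 1 := hmass
    field_simp at h2
    linear_combination h2
  have hdistinct : ∀ i ∈ I, ∀ i' ∈ I, i ≠ i' → Φ.evs i ≠ Φ.evs i' := by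
    intro i hi i' hi' hne' heq
    have hrC : ((r:ℝ):ℂ) ≠ 0 := by
      simp only [ne_eq, Complex.ofReal_eq_zero]
      exact ne_of_gt hr0
    have hze : ∀ j k, Φ.G.Adj j k → (starRingEnd ℂ) (Φ.Umat k i) * Φ.Umat k i'
        = (starRingEnd ℂ) (Φ.Umat j i) * Φ.Umat j i' := by
      intro j k hjk
      have h10 := Φ.edge_ratio (hperron i hi).2 (hperron i' hi').2 hjk
      have hev2 : ((Φ.evs i : ℝ):ℂ) * ((Φ.evs i' : ℝ):ℂ) = ((r:ℝ):ℂ)^2 := by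
        have hre : Φ.evs i * Φ.evs i' = (r:ℝ)^2 := by
          have h1 := hIeig i hi
          have h2 := congrArg (fun t => t*t) h1
          have h3 := abs_mul_abs_self (Φ.evs i)
          rw [← heq]
          nlinarith [h2, h3]
        rw [← Complex.ofReal_mul, hre]
        push_cast
        ring
      rw [hev2] at h10
      exact mul_left_cancel₀ (pow_ne_zero 2 hrC) h10
    have hzconst := walk_induct hconn
      (fun j => (starRingEnd ℂ) (Φ.Umat j i) * Φ.Umat j i'
        = (starRingEnd ℂ) (Φ.Umat v i) * Φ.Umat v i')
      (fun j k hjk hj => (hze j k hjk).trans hj) rfl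
    have horth := Φ.col_orthog i i'
    rw [if_neg hne', Finset.sum_congr rfl (fun j _ => hzconst j), Finset.sum_const,
      Finset.card_univ, nsmul_eq_mul] at horth
    have hnC : ((n:ℕ):ℂ) ≠ 0 := by
      simp only [ne_eq, Nat.cast_eq_zero]
      exact ne_of_gt (by exact_mod_cast hn0)
    have hzv0 := (mul_eq_zero.mp horth).resolve_left hnC
    have hx0 : Φ.Umat v i ≠ 0 := by
      intro hc
      have := hconstSq i hi v
      rw [hc] at this
      simp only [map_zero] at this
      rw [eq_comm, div_eq_iff (ne_of_gt hn0)] at this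
      norm_num at this
    have hy0 : Φ.Umat v i' ≠ 0 := by
      intro hc
      have := hconstSq i' hi' v
      rw [hc] at this
      simp only [map_zero] at this
      rw [eq_comm, div_eq_iff (ne_of_gt hn0)] at this
      norm_num at this
    exact (mul_ne_zero (star_ne_zero.mpr hx0) hy0) hzv0
  have hInonempty : I.Nonempty := by
    by_contra h
    rw [Finset.not_nonempty_iff_eq_empty] at h
    rw [h, Finset.sum_empty, mul_zero] at hmass
    norm_num at hmass
  have hIle2 : I.card ≤ 2 := by
    have h2 : I.card ≤ ({(r:ℝ), -(r:ℝ)} : Finset ℝ).card := by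
      apply Finset.card_le_card_of_injOn Φ.evs
      · intro i hi
        simp only [Finset.mem_coe, Finset.mem_insert, Finset.mem_singleton]
        exact (abs_eq (le_of_lt hr0)).mp (hIeig i hi)
      · intro i hi i' hi' hee
        by_contra hne'
        exact hdistinct i hi i' hi' hne' hee
    have h3 : ({(r:ℝ), -(r:ℝ)} : Finset ℝ).card ≤ 2 :=
      (Finset.card_insert_le _ _).trans (by simp)
    exact h2.trans h3
  have hge : r + 1 ≤ n := card_ge v (hreg v)
  have hI2 : I.card = 2 := by
    have h1 : 1 ≤ I.card := Finset.card_pos.mpr hInonempty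
    rcases (by omega : I.card = 1 ∨ I.card = 2) with h | h
    · exfalso
      rw [h] at hIcard
      norm_num at hIcard
      have h3 : (r:ℝ) + 1 ≤ n := by exact_mod_cast hge
      linarith
    · exact h
  have hn2r : (n:ℝ) = 2 * r := by
    rw [← hIcard, hI2]
    norm_num
  obtain ⟨a, b, hab, hIab⟩ := Finset.card_eq_two.mp hI2
  have haI : a ∈ I := by rw [hIab]; simp
  have hbI : b ∈ I := by rw [hIab]; simp
  have hvals : ∀ i ∈ I, Φ.evs i = r ∨ Φ.evs i = -r := fun i hi =>
    (abs_eq (le_of_lt hr0)).mp (hIeig i hi)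
  obtain ⟨iP, hiPI, hiP, iM, hiMI, hiM⟩ :
      ∃ iP ∈ I, Φ.evs iP = (r:ℝ) ∧ ∃ iM ∈ I, Φ.evs iM = -(r:ℝ) := by
    have hne2 := hdistinct a haI b hbI hab
    rcases hvals a haI with h1 | h1 <;> rcases hvals b hbI with h2 | h2
    · exact absurd (h1.trans h2.symm) hne2
    · exact ⟨a, haI, h1, b, hbI, h2⟩
    · exact ⟨b, hbI, h2, a, haI, h1⟩
    · exact absurd (h1.trans h2.symm) hne2
  have hrC : ((r:ℝ):ℂ) ≠ 0 := by
    simp only [ne_eq, Complex.ofReal_eq_zero]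
    exact ne_of_gt hr0
  have hxnz : ∀ i ∈ I, ∀ j, Φ.Umat j i ≠ 0 := by
    intro i hi j hc
    have := hconstSq i hi j
    rw [hc] at this
    simp only [map_zero] at this
    rw [eq_comm, div_eq_iff (ne_of_gt hn0)] at this
    norm_num at this
  -- Part 2: the switching function from the +r eigenvector
  have hxe : ∀ j k, Φ.G.Adj j k → Φ.A j k * Φ.Umat k iP = Φ.Umat j iP := by
    intro j k hjk
    have h1 := (hperron iP hiPI).2 j k hjk
    rw [hiP] at h1
    push_cast at h1
    have hrCn : ((r:ℕ):ℂ) ≠ 0 := Nat.cast_ne_zero.mpr (by omega)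
    exact mul_left_cancel₀ hrCn h1
  have hswitch : ∃ U : Matrix V V ℂ, U.IsDiag ∧ U ∈ Matrix.unitaryGroup V ℂ ∧
      Φ.A = U * (Φ.G.adjMatrix ℂ) * Uᴴ := by
    set c : ℂ := ((Real.sqrt n : ℝ) : ℂ) with hc
    have hc2 : c * c = ((n:ℝ):ℂ) := by
      rw [hc, ← Complex.ofReal_mul, Real.mul_self_sqrt (le_of_lt hn0)]
    set w : V → ℂ := fun j => c * Φ.Umat j iP with hw
    have hwnorm : ∀ j, w j * (starRingEnd ℂ) (w j) = 1 := by
      intro j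
      rw [hw]
      simp only [Complex.mul_conj]
      rw [Complex.normSq_mul, hconstSq iP hiPI j]
      have : Complex.normSq c = (n:ℝ) := by
        rw [hc, Complex.normSq_ofReal, Real.mul_self_sqrt (le_of_lt hn0)]
      rw [this]
      rw [show (n:ℝ) * (1/n) = 1 by field_simp]
      norm_num
    refine ⟨diagonal w, Matrix.isDiag_diagonal w, ?_, ?_⟩
    · rw [Matrix.mem_unitaryGroup_iff]
      rw [show star (diagonal w) = diagonal (star w) from Matrix.diagonal_conjTranspose w]
      rw [diagonal_mul_diagonal]
      rw [show (fun j => w j * star w j) = fun _ => (1:ℂ) from funext fun j => hwnorm j]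
      exact Matrix.diagonal_one
    · ext j k
      rw [Matrix.diagonal_conjTranspose, Matrix.mul_apply]
      rw [Finset.sum_eq_single k (fun l _ hl => by
        rw [Matrix.diagonal_apply_ne _ hl, mul_zero]) (by simp)]
      rw [Matrix.diagonal_apply_eq, Matrix.diagonal_mul, SimpleGraph.adjMatrix_apply]
      by_cases h : Φ.G.Adj j k
      · rw [if_pos h, mul_one]
        have h1 := hxe j k h
        have h2 : Φ.Umat k iP * (starRingEnd ℂ) (Φ.Umat k iP) = ((1/n : ℝ) : ℂ) := by
          rw [Complex.mul_conj, hconstSq iP hiPI k]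
        have hnC : ((n:ℝ):ℂ) ≠ 0 := by
          simp only [ne_eq, Complex.ofReal_eq_zero]
          exact ne_of_gt hn0
        rw [hw]
        simp only [Pi.star_apply, star_mul', RCLike.star_def]
        have goal2 : Φ.A j k * ((1/n : ℝ) : ℂ) = Φ.Umat j iP * (starRingEnd ℂ) (Φ.Umat k iP) := by
          rw [← h2, ← h1]
          ring
        have h1n : ((1/n : ℝ) : ℂ) * ((n:ℝ):ℂ) = 1 := by
          rw [← Complex.ofReal_mul]
          rw [show (1/n : ℝ) * n = 1 by field_simp]
          norm_num
        calc Φ.A j k = Φ.A j k * (((1/n : ℝ) : ℂ) * ((n:ℝ):ℂ)) := by rw [h1n, mul_one]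
          _ = (Φ.A j k * ((1/n : ℝ) : ℂ)) * ((n:ℝ):ℂ) := by ring
          _ = (Φ.Umat j iP * (starRingEnd ℂ) (Φ.Umat k iP)) * (c * c) := by rw [goal2, hc2]
          _ = c * Φ.Umat j iP * ((starRingEnd ℂ) c * (starRingEnd ℂ) (Φ.Umat k iP)) := by
              rw [hc, Complex.conj_ofReal]
              ring
      · rw [if_neg h, mul_zero, zero_mul]
        exact Φ.zeroGain j k h
  -- Part 3: the bipartition
  set z : V → ℂ := fun j => (starRingEnd ℂ) (Φ.Umat j iP) * Φ.Umat j iM with hz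
  have hflip : ∀ j k, Φ.G.Adj j k → z k = - z j := by
    intro j k hjk
    have h10 := Φ.edge_ratio (hperron iP hiPI).2 (hperron iM hiMI).2 hjk
    rw [hiP, hiM] at h10
    push_cast at h10
    have hrCn : ((r:ℕ):ℂ) ≠ 0 := Nat.cast_ne_zero.mpr (by omega)
    apply mul_left_cancel₀ (pow_ne_zero 2 hrCn)
    show ((r:ℕ):ℂ)^2 * ((starRingEnd ℂ) (Φ.Umat k iP) * Φ.Umat k iM)
      = ((r:ℕ):ℂ)^2 * (-((starRingEnd ℂ) (Φ.Umat j iP) * Φ.Umat j iM))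
    linear_combination h10
  have hznz : ∀ j, z j ≠ 0 := fun j =>
    mul_ne_zero (star_ne_zero.mpr (hxnz iP hiPI j)) (hxnz iM hiMI j)
  have hzcases : ∀ j, z j = z v ∨ z j = - z v :=
    walk_induct hconn (fun j => z j = z v ∨ z j = - z v)
      (fun j k hjk hj => by
        rcases hj with h | h
        · right; rw [hflip j k hjk, h]
        · left; rw [hflip j k hjk, h, neg_neg])
      (Or.inl rfl)
  set X := Finset.univ.filter (fun j => z j = z v) with hX
  have hmemX : ∀ j, j ∈ X ↔ z j = z v := by
    intro j
    rw [hX, Finset.mem_filter]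
    simp
  have hzvne : z v ≠ - z v := by
    intro hcon
    apply hznz v
    have h2 : z v + z v = 0 := by
      nth_rewrite 1 [hcon]
      ring
    have := add_self_eq_zero.mp h2
    exact this
  have hstep1 : ∀ j k, Φ.G.Adj j k → (j ∈ X ↔ k ∉ X) := by
    intro j k hjk
    rw [hmemX, hmemX]
    constructor
    · intro hj hk
      rw [hflip j k hjk, hj] at hk
      exact hzvne hk.symm
    · intro hk
      rcases hzcases j with h | h
      · exact h
      · exfalso
        apply hk
        rw [hflip j k hjk, h, neg_neg]
  have hvmem : v ∈ X := (hmemX v).mpr rfl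
  have hnsub1 : ∀ j, j ∈ X → Φ.G.neighborFinset j ⊆ Xᶜ := by
    intro j hj k hk
    rw [Finset.mem_compl]
    exact (hstep1 j k ((SimpleGraph.mem_neighborFinset _ _ _).mp hk)).mp hj
  have hnsub2 : ∀ j, j ∉ X → Φ.G.neighborFinset j ⊆ X := by
    intro j hj k hk
    by_contra hkX
    exact hj ((hstep1 j k ((SimpleGraph.mem_neighborFinset _ _ _).mp hk)).mpr hkX)
  have hcardsum : X.card + Xᶜ.card = n := Finset.card_add_card_compl X
  have hXc_ge : r ≤ Xᶜ.card := by
    calc r = (Φ.G.neighborFinset v).card := by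
          rw [SimpleGraph.card_neighborFinset_eq_degree, hreg]
      _ ≤ Xᶜ.card := Finset.card_le_card (hnsub1 v hvmem)
  obtain ⟨k0, hk0⟩ : (Φ.G.neighborFinset v).Nonempty := by
    rw [← Finset.card_pos, SimpleGraph.card_neighborFinset_eq_degree, hreg]
    exact hr
  have hk0X : k0 ∉ X := (hstep1 v k0 ((SimpleGraph.mem_neighborFinset _ _ _).mp hk0)).mp hvmem
  have hX_ge : r ≤ X.card := by
    calc r = (Φ.G.neighborFinset k0).card := by
          rw [SimpleGraph.card_neighborFinset_eq_degree, hreg]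
      _ ≤ X.card := Finset.card_le_card (hnsub2 k0 hk0X)
  have hn2r' : n = 2 * r := by exact_mod_cast hn2r
  have hXcard : X.card = r := by omega
  have hXccard : Xᶜ.card = r := by omega
  have hcomp : ∀ j k, j ∈ X → k ∉ X → Φ.G.Adj j k := by
    intro j k hj hk
    have heq2 : Φ.G.neighborFinset j = Xᶜ := by
      apply Finset.eq_of_subset_of_card_le (hnsub1 j hj)
      rw [SimpleGraph.card_neighborFinset_eq_degree, hreg, hXccard]
    have : k ∈ Φ.G.neighborFinset j := by
      rw [heq2, Finset.mem_compl]
      exact hk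
    exact (SimpleGraph.mem_neighborFinset _ _ _).mp this
  have hAdjiff : ∀ j k, Φ.G.Adj j k ↔ ((j ∈ X ∧ k ∉ X) ∨ (j ∉ X ∧ k ∈ X)) := by
    intro j k
    constructor
    · intro hjk
      by_cases hj : j ∈ X
      · exact Or.inl ⟨hj, (hstep1 j k hjk).mp hj⟩
      · refine Or.inr ⟨hj, ?_⟩
        by_contra hk
        exact hj ((hstep1 j k hjk).mpr hk)
    · rintro (⟨hj, hk⟩ | ⟨hj, hk⟩)
      · exact hcomp j k hj hk
      · exact (hcomp k j hk hj).symm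
  refine ⟨?_, hswitch⟩
  · -- build the equivalence
    let eX : {a // a ∈ X} ≃ Fin r := X.equivFin.trans (finCongr hXcard)
    let eY : {a // ¬ a ∈ X} ≃ Fin r :=
      ((Equiv.subtypeEquivRight (fun a => (Finset.mem_compl (s := X)).symm)).trans
        Xᶜ.equivFin).trans (finCongr hXccard)
    refine ⟨(Equiv.sumCompl (fun a => a ∈ X)).symm.trans (Equiv.sumCongr eX eY), ?_⟩
    intro i j
    rw [hAdjiff]
    by_cases hi : i ∈ X <;> by_cases hj : j ∈ X <;>
      simp [Equiv.sumCompl_symm_apply_of_pos, Equiv.sumCompl_symm_apply_of_neg, hi, hj]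

end TGainGraph


end AuxLemmas

open TGainGraph in
/-- On a connected `r`-regular graph (`r ≥ 1`), every vertex energy is at least 1,
with equality iff `Φ ∼ (K_{r,r}, 1)`. -/
theorem one_le_vertexEnergy_of_regular {V : Type*} [Fintype V] [DecidableEq V]
    (Φ : TGainGraph V) (hconn : Φ.G.Connected) (r : ℕ) (hr : 1 ≤ r)
    (hreg : ∀ v, Φ.deg v = r) :
    ∀ v, 1 ≤ Φ.vertexEnergy v ∧
      (Φ.vertexEnergy v = 1 ↔ Φ.SwitchEquivToCompleteBipartite r r) := by
  intro v
  have hreg' : ∀ w, Φ.G.degree w = r := hreg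
  refine ⟨Φ.one_le_vE hconn hr hreg' v, ?_, ?_⟩
  · intro hE
    exact Φ.equality_case hconn hr hreg' v hE
  · rintro ⟨⟨e, he⟩, U, hdiag, hU, hA⟩
    exact Φ.converse_case hr hreg' e he U hdiag hU hA v
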